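/- Fix μ₀ ∈ P(K). The function F : P(K) → [0,∞), F(μ) := d₂(μ, μ₀)² = ∑_{k=1}^∞ 2^{-k} q_k^{-1} ⟨μ − μ₀, f_k⟩², is twice differentiable in the linear functional sense, with δF/δm(μ,x) = ∑_{k=1}^∞ 2^{-k} q_k^{-1} · 2⟨μ−μ₀, f_k⟩ f_k(x) and δ²F/δm²(μ,x,y) = ∑_{k=1}^∞ 2^{-k} q_k^{-1} · 2 f_k(x) f_k(y); both series converge uniformly and the derivatives are bounded by constants independent of μ₀ (namely ‖δF/δm‖_∞ ≤ 4 and ‖δ²F/δm²‖_∞ ≤ 2). -/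

import Mathlib

open MeasureTheory Real Filter Topology Set intervalIntegral

noncomputable def pairing {d : ℕ} {K : Set (EuclideanSpace ℝ (Fin d))}
    (μ : ProbabilityMeasure K) (f : EuclideanSpace ℝ (Fin d) → ℝ) : ℝ :=
  ∫ x, f (x : EuclideanSpace ℝ (Fin d)) ∂(μ : Measure K)

noncomputable def d2 {d : ℕ} {K : Set (EuclideanSpace ℝ (Fin d))}
    (F : ℕ → EuclideanSpace ℝ (Fin d) → ℝ) (q : ℕ → ℝ)
    (μ ν : ProbabilityMeasure K) : ℝ :=
  Real.sqrt (∑' k : ℕ, (2 : ℝ)⁻¹ ^ (k + 1) * (q k)⁻¹ * (pairing μ (F k) - pairing ν (F k)) ^ 2)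

/- ## Auxiliary lemmas -/

lemma geo_summable (C : ℝ) : Summable (fun k : ℕ => C * (2⁻¹:ℝ)^(k+1)) := by
  have h := (summable_geometric_of_lt_one (by norm_num : (0:ℝ) ≤ 2⁻¹)
    (by norm_num : (2⁻¹:ℝ) < 1)).mul_left C
  exact (h.mul_right 2⁻¹).congr (fun k => by rw [pow_succ]; ring)

lemma geo_tsum : ∑' k : ℕ, (2⁻¹:ℝ)^(k+1) = 1 := by
  have h := tsum_geometric_of_lt_one (by norm_num : (0:ℝ) ≤ 2⁻¹) (by norm_num : (2⁻¹:ℝ) < 1)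
  calc ∑' k : ℕ, (2⁻¹:ℝ)^(k+1) = ∑' k : ℕ, 2⁻¹ * (2⁻¹:ℝ)^k := by
        refine tsum_congr fun k => by rw [pow_succ]; ring
    _ = 2⁻¹ * ∑' k : ℕ, (2⁻¹:ℝ)^k := tsum_mul_left
    _ = 1 := by rw [h]; norm_num

lemma summable_of_geo_bound {t : ℕ → ℝ} {C : ℝ} (ht : ∀ k, |t k| ≤ C * (2⁻¹:ℝ)^(k+1)) :
    Summable t := by
  refine Summable.of_norm_bounded (geo_summable C) (fun k => ?_)
  rw [Real.norm_eq_abs]; exact ht k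

lemma tsum_abs_le_of_geo_bound {t : ℕ → ℝ} {C : ℝ} (ht : ∀ k, |t k| ≤ C * (2⁻¹:ℝ)^(k+1)) :
    |∑' k, t k| ≤ C := by
  have habs : Summable (fun k => |t k|) := by
    refine summable_of_geo_bound (t := fun k => |t k|) (C := C) (fun k => ?_)
    rw [abs_abs]; exact ht k
  have h1 : |∑' k, t k| ≤ ∑' k, |t k| := by
    have := norm_tsum_le_tsum_norm (f := t) (by simpa only [Real.norm_eq_abs] using habs)
    simpa only [Real.norm_eq_abs] using this
  refine h1.trans ?_
  calc ∑' k, |t k| ≤ ∑' k : ℕ, C * (2⁻¹:ℝ)^(k+1) := Summable.tsum_le_tsum ht habs (geo_summable C)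
    _ = C * ∑' k : ℕ, (2⁻¹:ℝ)^(k+1) := tsum_mul_left
    _ = C := by rw [geo_tsum]; ring

lemma term_bound {r w a A : ℝ} (hr : 0 ≤ r) (hw0 : 0 ≤ w) (hw1 : w ≤ 1) (ha : |a| ≤ A) :
    |r * w * a| ≤ A * r := by
  rw [abs_mul, abs_mul, abs_of_nonneg hr, abs_of_nonneg hw0]
  have hA : 0 ≤ A := le_trans (abs_nonneg a) ha
  have h1 : (r*w)*|a| ≤ (r*w)*A := mul_le_mul_of_nonneg_left ha (mul_nonneg hr hw0)
  have h2 : r*w ≤ r := by nlinarith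
  have h3 : (r*w)*A ≤ r*A := mul_le_mul_of_nonneg_right h2 hA
  linarith

section Aux
variable {d : ℕ} {K : Set (EuclideanSpace ℝ (Fin d))}

lemma pairing_integrable (μ : ProbabilityMeasure K) {f : EuclideanSpace ℝ (Fin d) → ℝ}
    (hc : Continuous f) (hb : ∀ x ∈ K, |f x| ≤ 1) :
    Integrable (fun x : K => f (x : EuclideanSpace ℝ (Fin d))) (μ : Measure K) := by
  refine Integrable.mono' (integrable_const 1)
    ((hc.comp continuous_subtype_val).aestronglyMeasurable) (ae_of_all _ fun x => ?_)
  rw [Real.norm_eq_abs]; exact hb x.1 x.2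

lemma pairing_abs_le (μ : ProbabilityMeasure K) {f : EuclideanSpace ℝ (Fin d) → ℝ}
    (hb : ∀ x ∈ K, |f x| ≤ 1) : |pairing μ f| ≤ 1 := by
  have := norm_integral_le_of_norm_le_const (μ := (μ : Measure K)) (C := 1)
    (f := fun x : K => f (x : EuclideanSpace ℝ (Fin d)))
    (ae_of_all _ fun x => by rw [Real.norm_eq_abs]; exact hb x.1 x.2)
  simpa [pairing, Real.norm_eq_abs] using this

lemma integral_tsum_swap (F : ℕ → EuclideanSpace ℝ (Fin d) → ℝ)
    (hcont : ∀ k, Continuous (F k)) (hbd : ∀ k, ∀ x ∈ K, |F k x| ≤ 1)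
    (μ : ProbabilityMeasure K) (t : ℕ → ℝ) (C : ℝ)
    (ht : ∀ k, |t k| ≤ C * (2⁻¹:ℝ)^(k+1)) :
    ∫ x : K, (∑' k, t k * F k (x : EuclideanSpace ℝ (Fin d))) ∂(μ : Measure K)
      = ∑' k, t k * pairing μ (F k) := by
  have hint : ∀ k, Integrable (fun x : K => t k * F k (x : EuclideanSpace ℝ (Fin d)))
      (μ : Measure K) := fun k => (pairing_integrable μ (hcont k) (hbd k)).const_mul (t k)
  have hle : ∀ k, (∫ x : K, ‖t k * F k (x : EuclideanSpace ℝ (Fin d))‖ ∂(μ : Measure K))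
      ≤ |t k| := by
    intro k
    have h1 : (∫ x : K, ‖t k * F k (x : EuclideanSpace ℝ (Fin d))‖ ∂(μ : Measure K))
        ≤ ∫ _x : K, |t k| ∂(μ : Measure K) := by
      refine integral_mono (hint k).norm (integrable_const _) (fun x => ?_)
      rw [Real.norm_eq_abs, abs_mul]
      have := hbd k x.1 x.2
      nlinarith [abs_nonneg (t k)]
    simpa using h1
  have hsum : Summable (fun k =>
      ∫ x : K, ‖t k * F k (x : EuclideanSpace ℝ (Fin d))‖ ∂(μ : Measure K)) := by
    refine summable_of_geo_bound (C := C) (fun k => ?_)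
    rw [abs_of_nonneg (integral_nonneg (fun x => norm_nonneg _))]
    exact (hle k).trans (ht k)
  have := integral_tsum_of_summable_integral_norm hint hsum
  rw [← this]
  exact tsum_congr fun k => integral_const_mul (t k) _

lemma qseries_summable (q : ℕ → ℝ) (hq : ∀ k, 1 ≤ q k) (e : ℕ → ℝ) (A : ℝ)
    (he : ∀ k, |e k| ≤ A) :
    Summable (fun k : ℕ => (2:ℝ)⁻¹^(k+1) * (q k)⁻¹ * e k) :=
  summable_of_geo_bound (C := A) fun k => term_bound (by positivity)
    (inv_nonneg.2 (by linarith [hq k])) (inv_le_one_of_one_le₀ (hq k)) (he k)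

lemma qseries_abs_le (q : ℕ → ℝ) (hq : ∀ k, 1 ≤ q k) (e : ℕ → ℝ) (A : ℝ)
    (he : ∀ k, |e k| ≤ A) :
    |∑' k : ℕ, (2:ℝ)⁻¹^(k+1) * (q k)⁻¹ * e k| ≤ A :=
  tsum_abs_le_of_geo_bound fun k => term_bound (by positivity)
    (inv_nonneg.2 (by linarith [hq k])) (inv_le_one_of_one_le₀ (hq k)) (he k)

lemma qseries_swap (F : ℕ → EuclideanSpace ℝ (Fin d) → ℝ) (q : ℕ → ℝ)
    (hcont : ∀ k, Continuous (F k)) (hbd : ∀ k, ∀ x ∈ K, |F k x| ≤ 1)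
    (hq : ∀ k, 1 ≤ q k) (ρ : ProbabilityMeasure K) (m : ℕ → ℝ) (M : ℝ)
    (hm : ∀ k, |m k| ≤ M) :
    ∫ x : K, (∑' k, (2:ℝ)⁻¹^(k+1) * (q k)⁻¹ * (2 * m k * F k (x : EuclideanSpace ℝ (Fin d))))
        ∂(ρ : Measure K)
      = ∑' k, (2:ℝ)⁻¹^(k+1) * (q k)⁻¹ * (2 * m k * pairing ρ (F k)) := by
  have h1 : (fun x : K => ∑' k, (2:ℝ)⁻¹^(k+1) * (q k)⁻¹ *
        (2 * m k * F k (x : EuclideanSpace ℝ (Fin d))))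
      = fun x : K => ∑' k, ((2:ℝ)⁻¹^(k+1) * (q k)⁻¹ * (2 * m k)) *
        F k (x : EuclideanSpace ℝ (Fin d)) :=
    funext fun x => tsum_congr fun k => by ring
  have hb : ∀ k, |(2:ℝ)⁻¹^(k+1) * (q k)⁻¹ * (2 * m k)| ≤ (2*M) * (2⁻¹:ℝ)^(k+1) := by
    intro k
    refine term_bound (by positivity) (inv_nonneg.2 (by linarith [hq k]))
      (inv_le_one_of_one_le₀ (hq k)) ?_
    rw [abs_mul, abs_two]
    nlinarith [hm k, abs_nonneg (m k)]
  rw [h1, integral_tsum_swap F hcont hbd ρ _ (2*M) hb]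
  exact tsum_congr fun k => by ring

end Aux

/-- Fix `μ₀ ∈ P(K)`. The function `F(μ) := d₂(μ,μ₀)²` is twice
differentiable in the linear functional sense, with
`δF/δm(μ,x) = ∑_k 2^{-k} q_k⁻¹ · 2⟨μ-μ₀,f_k⟩ f_k(x)` and
`δ²F/δm²(μ,x,y) = ∑_k 2^{-k} q_k⁻¹ · 2 f_k(x) f_k(y)`; both series converge and the
derivatives are bounded by `4` and `2` respectively, independently of `μ₀`. -/
theorem d2_sq_twice_lfd_differentiable {d : ℕ} {K : Set (EuclideanSpace ℝ (Fin d))}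
    (hK : IsCompact K)
    (F : ℕ → EuclideanSpace ℝ (Fin d) → ℝ) (q : ℕ → ℝ)
    (hcont : ∀ k, Continuous (F k))
    (hbd : ∀ k, ∀ x ∈ K, |F k x| ≤ 1)
    (hq : ∀ k, 1 ≤ q k)
    (μ₀ : ProbabilityMeasure K) :
    -- the series defining the two derivatives converge
    (∀ (c : ℕ → ℝ), (∀ k, |c k| ≤ 2) → ∀ x ∈ K,
      Summable (fun k : ℕ => (2 : ℝ)⁻¹ ^ (k + 1) * (q k)⁻¹ * (2 * c k * F k x))) ∧
    (∀ x ∈ K, ∀ y ∈ K,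
      Summable (fun k : ℕ => (2 : ℝ)⁻¹ ^ (k + 1) * (q k)⁻¹ * (2 * F k x * F k y))) ∧
    -- first-order linear functional derivative identity
    (∀ μ ν : ProbabilityMeasure K,
      d2 F q μ μ₀ ^ 2 - d2 F q ν μ₀ ^ 2 =
        ∫ θ in (0:ℝ)..1,
          ((∫ x, (∑' k : ℕ, (2 : ℝ)⁻¹ ^ (k + 1) * (q k)⁻¹ *
              (2 * (θ * pairing μ (F k) + (1 - θ) * pairing ν (F k) - pairing μ₀ (F k)) *
                F k (x : EuclideanSpace ℝ (Fin d)))) ∂(μ : Measure K)) -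
           (∫ x, (∑' k : ℕ, (2 : ℝ)⁻¹ ^ (k + 1) * (q k)⁻¹ *
              (2 * (θ * pairing μ (F k) + (1 - θ) * pairing ν (F k) - pairing μ₀ (F k)) *
                F k (x : EuclideanSpace ℝ (Fin d)))) ∂(ν : Measure K)))) ∧
    -- second-order linear functional derivative identity (in `μ`, for fixed `x`)
    (∀ x ∈ K, ∀ μ ν : ProbabilityMeasure K,
      (∑' k : ℕ, (2 : ℝ)⁻¹ ^ (k + 1) * (q k)⁻¹ *
          (2 * (pairing μ (F k) - pairing μ₀ (F k)) * F k x)) -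
      (∑' k : ℕ, (2 : ℝ)⁻¹ ^ (k + 1) * (q k)⁻¹ *
          (2 * (pairing ν (F k) - pairing μ₀ (F k)) * F k x)) =
        ∫ θ in (0:ℝ)..1,
          ((∫ y, (∑' k : ℕ, (2 : ℝ)⁻¹ ^ (k + 1) * (q k)⁻¹ *
              (2 * F k x * F k (y : EuclideanSpace ℝ (Fin d)))) ∂(μ : Measure K)) -
           (∫ y, (∑' k : ℕ, (2 : ℝ)⁻¹ ^ (k + 1) * (q k)⁻¹ *
              (2 * F k x * F k (y : EuclideanSpace ℝ (Fin d)))) ∂(ν : Measure K)))) ∧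
    -- uniform bounds, independent of `μ₀`
    (∀ μ : ProbabilityMeasure K, ∀ x ∈ K,
      |∑' k : ℕ, (2 : ℝ)⁻¹ ^ (k + 1) * (q k)⁻¹ *
          (2 * (pairing μ (F k) - pairing μ₀ (F k)) * F k x)| ≤ 4) ∧
    (∀ x ∈ K, ∀ y ∈ K,
      |∑' k : ℕ, (2 : ℝ)⁻¹ ^ (k + 1) * (q k)⁻¹ * (2 * F k x * F k y)| ≤ 2) := by
  have hP : ∀ (ρ : ProbabilityMeasure K) (k : ℕ), |pairing ρ (F k)| ≤ 1 :=
    fun ρ k => pairing_abs_le ρ (hbd k)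
  have hPd : ∀ (ρ σ : ProbabilityMeasure K) (k : ℕ),
      |pairing ρ (F k) - pairing σ (F k)| ≤ 2 := by
    intro ρ σ k
    have h1 := abs_le.1 (hP ρ k); have h2 := abs_le.1 (hP σ k)
    rw [abs_le]
    constructor <;> [linarith [h1.1, h2.2]; linarith [h1.2, h2.1]]
  refine ⟨?_, ?_, ?_, ?_, ?_, ?_⟩
  · -- summability of first derivative series
    intro c hc x hx
    refine qseries_summable q hq _ 4 (fun k => ?_)
    have h1 := hc k; have h2 := hbd k x hx
    rw [abs_mul, abs_mul, abs_two]
    nlinarith [abs_nonneg (c k), abs_nonneg (F k x)]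
  · -- summability of second derivative series
    intro x hx y hy
    refine qseries_summable q hq _ 2 (fun k => ?_)
    have h1 := hbd k x hx; have h2 := hbd k y hy
    rw [abs_mul, abs_mul, abs_two]
    nlinarith [abs_nonneg (F k x), abs_nonneg (F k y)]
  · -- first-order linear functional derivative identity
    intro μ ν
    have hd2 : ∀ ρ : ProbabilityMeasure K, d2 F q ρ μ₀ ^ 2
        = ∑' k : ℕ, (2:ℝ)⁻¹^(k+1) * (q k)⁻¹ * (pairing ρ (F k) - pairing μ₀ (F k))^2 := by
      intro ρ
      unfold d2
      exact Real.sq_sqrt (tsum_nonneg fun k => mul_nonneg (mul_nonneg (by positivity)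
        (inv_nonneg.2 (by linarith [hq k]))) (sq_nonneg _))
    have sU : Summable (fun k : ℕ => (2:ℝ)⁻¹^(k+1) * (q k)⁻¹ *
        (2 * (pairing μ (F k) - pairing ν (F k))^2)) := by
      refine qseries_summable q hq _ 8 (fun k => ?_)
      have h1 := abs_le.1 (hPd μ ν k)
      rw [abs_of_nonneg (by positivity)]
      nlinarith [h1.1, h1.2]
    have sV : Summable (fun k : ℕ => (2:ℝ)⁻¹^(k+1) * (q k)⁻¹ *
        (2 * ((pairing ν (F k) - pairing μ₀ (F k)) * (pairing μ (F k) - pairing ν (F k))))) := by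
      refine qseries_summable q hq _ 8 (fun k => ?_)
      have h1 := hPd ν μ₀ k; have h2 := hPd μ ν k
      rw [abs_mul, abs_mul, abs_two]
      nlinarith [abs_nonneg (pairing ν (F k) - pairing μ₀ (F k)),
        abs_nonneg (pairing μ (F k) - pairing ν (F k))]
    have sμ2 : Summable (fun k : ℕ => (2:ℝ)⁻¹^(k+1) * (q k)⁻¹ *
        (pairing μ (F k) - pairing μ₀ (F k))^2) := by
      refine qseries_summable q hq _ 4 (fun k => ?_)
      have h1 := abs_le.1 (hPd μ μ₀ k)
      rw [abs_of_nonneg (sq_nonneg _)]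
      nlinarith [h1.1, h1.2]
    have sν2 : Summable (fun k : ℕ => (2:ℝ)⁻¹^(k+1) * (q k)⁻¹ *
        (pairing ν (F k) - pairing μ₀ (F k))^2) := by
      refine qseries_summable q hq _ 4 (fun k => ?_)
      have h1 := abs_le.1 (hPd ν μ₀ k)
      rw [abs_of_nonneg (sq_nonneg _)]
      nlinarith [h1.1, h1.2]
    set U := ∑' k : ℕ, (2:ℝ)⁻¹^(k+1) * (q k)⁻¹ *
        (2 * (pairing μ (F k) - pairing ν (F k))^2) with hUdef
    set V := ∑' k : ℕ, (2:ℝ)⁻¹^(k+1) * (q k)⁻¹ *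
        (2 * ((pairing ν (F k) - pairing μ₀ (F k)) * (pairing μ (F k) - pairing ν (F k))))
        with hVdef
    have key : ∀ θ : ℝ,
        ((∫ x, (∑' k : ℕ, (2 : ℝ)⁻¹ ^ (k + 1) * (q k)⁻¹ *
            (2 * (θ * pairing μ (F k) + (1 - θ) * pairing ν (F k) - pairing μ₀ (F k)) *
              F k (x : EuclideanSpace ℝ (Fin d)))) ∂(μ : Measure K)) -
         (∫ x, (∑' k : ℕ, (2 : ℝ)⁻¹ ^ (k + 1) * (q k)⁻¹ *
            (2 * (θ * pairing μ (F k) + (1 - θ) * pairing ν (F k) - pairing μ₀ (F k)) *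
              F k (x : EuclideanSpace ℝ (Fin d)))) ∂(ν : Measure K))) = θ * U + V := by
      intro θ
      have hM : (0:ℝ) ≤ |θ| + |1 - θ| + 1 := by positivity
      have hm : ∀ k, |θ * pairing μ (F k) + (1 - θ) * pairing ν (F k) - pairing μ₀ (F k)|
          ≤ |θ| + |1 - θ| + 1 := by
        intro k
        have e1 : |θ * pairing μ (F k)| ≤ |θ| := by
          rw [abs_mul]; nlinarith [abs_nonneg θ, hP μ k, abs_nonneg (pairing μ (F k))]
        have e2 : |(1 - θ) * pairing ν (F k)| ≤ |1 - θ| := by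
          rw [abs_mul]; nlinarith [abs_nonneg (1 - θ), hP ν k, abs_nonneg (pairing ν (F k))]
        calc |θ * pairing μ (F k) + (1 - θ) * pairing ν (F k) - pairing μ₀ (F k)|
            ≤ |θ * pairing μ (F k) + (1 - θ) * pairing ν (F k)| + |pairing μ₀ (F k)| :=
              abs_sub _ _
          _ ≤ (|θ * pairing μ (F k)| + |(1 - θ) * pairing ν (F k)|) + |pairing μ₀ (F k)| := by
              linarith [abs_add_le (θ * pairing μ (F k)) ((1 - θ) * pairing ν (F k))]
          _ ≤ |θ| + |1 - θ| + 1 := by linarith [hP μ₀ k]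
      have hswμ : (∫ x, (∑' k : ℕ, (2 : ℝ)⁻¹ ^ (k + 1) * (q k)⁻¹ *
            (2 * (θ * pairing μ (F k) + (1 - θ) * pairing ν (F k) - pairing μ₀ (F k)) *
              F k (x : EuclideanSpace ℝ (Fin d)))) ∂(μ : Measure K))
          = ∑' k : ℕ, (2 : ℝ)⁻¹ ^ (k + 1) * (q k)⁻¹ *
            (2 * (θ * pairing μ (F k) + (1 - θ) * pairing ν (F k) - pairing μ₀ (F k)) *
              pairing μ (F k)) :=
        qseries_swap F q hcont hbd hq μ
          (fun k => θ * pairing μ (F k) + (1 - θ) * pairing ν (F k) - pairing μ₀ (F k))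
          (|θ| + |1 - θ| + 1) hm
      have hswν : (∫ x, (∑' k : ℕ, (2 : ℝ)⁻¹ ^ (k + 1) * (q k)⁻¹ *
            (2 * (θ * pairing μ (F k) + (1 - θ) * pairing ν (F k) - pairing μ₀ (F k)) *
              F k (x : EuclideanSpace ℝ (Fin d)))) ∂(ν : Measure K))
          = ∑' k : ℕ, (2 : ℝ)⁻¹ ^ (k + 1) * (q k)⁻¹ *
            (2 * (θ * pairing μ (F k) + (1 - θ) * pairing ν (F k) - pairing μ₀ (F k)) *
              pairing ν (F k)) :=
        qseries_swap F q hcont hbd hq ν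
          (fun k => θ * pairing μ (F k) + (1 - θ) * pairing ν (F k) - pairing μ₀ (F k))
          (|θ| + |1 - θ| + 1) hm
      have hbnd : ∀ (ρ : ProbabilityMeasure K) (k : ℕ),
          |2 * (θ * pairing μ (F k) + (1 - θ) * pairing ν (F k) - pairing μ₀ (F k)) *
            pairing ρ (F k)| ≤ 2 * (|θ| + |1 - θ| + 1) := by
        intro ρ k
        rw [abs_mul, abs_mul, abs_two]
        have h2 : |θ * pairing μ (F k) + (1 - θ) * pairing ν (F k) - pairing μ₀ (F k)| *
            |pairing ρ (F k)| ≤ (|θ| + |1 - θ| + 1) * 1 :=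
          mul_le_mul (hm k) (hP ρ k) (abs_nonneg _) hM
        linarith [h2]
      have s1 : Summable (fun k : ℕ => (2 : ℝ)⁻¹ ^ (k + 1) * (q k)⁻¹ *
          (2 * (θ * pairing μ (F k) + (1 - θ) * pairing ν (F k) - pairing μ₀ (F k)) *
            pairing μ (F k))) :=
        qseries_summable q hq _ (2 * (|θ| + |1 - θ| + 1)) (fun k => hbnd μ k)
      have s2 : Summable (fun k : ℕ => (2 : ℝ)⁻¹ ^ (k + 1) * (q k)⁻¹ *
          (2 * (θ * pairing μ (F k) + (1 - θ) * pairing ν (F k) - pairing μ₀ (F k)) *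
            pairing ν (F k))) :=
        qseries_summable q hq _ (2 * (|θ| + |1 - θ| + 1)) (fun k => hbnd ν k)
      rw [hswμ, hswν, ← Summable.tsum_sub s1 s2, hUdef, hVdef, ← tsum_mul_left,
        ← Summable.tsum_add (sU.mul_left θ) sV]
      exact tsum_congr fun k => by ring
    have hint : (∫ θ in (0:ℝ)..1, (θ * U + V)) = U/2 + V := by
      rw [intervalIntegral.integral_add (f := fun θ : ℝ => θ * U) (g := fun _ => V)
        ((continuous_id'.mul continuous_const).intervalIntegrable _ _)
        (intervalIntegrable_const), intervalIntegral.integral_mul_const, integral_id,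
        intervalIntegral.integral_const]
      norm_num; ring
    rw [intervalIntegral.integral_congr (fun θ _ => key θ), hint, hd2 μ, hd2 ν,
      ← Summable.tsum_sub sμ2 sν2, hUdef, hVdef, ← tsum_div_const, ← Summable.tsum_add (sU.div_const 2) sV]
    exact tsum_congr fun k => by ring
  · -- second-order identity
    intro x hx μ ν
    have hswμ : (∫ y, (∑' k : ℕ, (2 : ℝ)⁻¹ ^ (k + 1) * (q k)⁻¹ *
          (2 * F k x * F k (y : EuclideanSpace ℝ (Fin d)))) ∂(μ : Measure K))
        = ∑' k : ℕ, (2 : ℝ)⁻¹ ^ (k + 1) * (q k)⁻¹ * (2 * F k x * pairing μ (F k)) :=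
      qseries_swap F q hcont hbd hq μ (fun k => F k x) 1 (fun k => hbd k x hx)
    have hswν : (∫ y, (∑' k : ℕ, (2 : ℝ)⁻¹ ^ (k + 1) * (q k)⁻¹ *
          (2 * F k x * F k (y : EuclideanSpace ℝ (Fin d)))) ∂(ν : Measure K))
        = ∑' k : ℕ, (2 : ℝ)⁻¹ ^ (k + 1) * (q k)⁻¹ * (2 * F k x * pairing ν (F k)) :=
      qseries_swap F q hcont hbd hq ν (fun k => F k x) 1 (fun k => hbd k x hx)
    have hb1 : ∀ (ρ : ProbabilityMeasure K) (k : ℕ),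
        |2 * (pairing ρ (F k) - pairing μ₀ (F k)) * F k x| ≤ 4 := by
      intro ρ k
      have h1 := hPd ρ μ₀ k; have h2 := hbd k x hx
      rw [abs_mul, abs_mul, abs_two]
      nlinarith [abs_nonneg (pairing ρ (F k) - pairing μ₀ (F k)), abs_nonneg (F k x)]
    have hb2 : ∀ (ρ : ProbabilityMeasure K) (k : ℕ),
        |2 * F k x * pairing ρ (F k)| ≤ 2 := by
      intro ρ k
      have h1 := hbd k x hx; have h2 := hP ρ k
      rw [abs_mul, abs_mul, abs_two]
      nlinarith [abs_nonneg (F k x), abs_nonneg (pairing ρ (F k))]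
    have s1 : Summable (fun k : ℕ => (2 : ℝ)⁻¹ ^ (k + 1) * (q k)⁻¹ *
        (2 * (pairing μ (F k) - pairing μ₀ (F k)) * F k x)) :=
      qseries_summable q hq _ 4 (fun k => hb1 μ k)
    have s2 : Summable (fun k : ℕ => (2 : ℝ)⁻¹ ^ (k + 1) * (q k)⁻¹ *
        (2 * (pairing ν (F k) - pairing μ₀ (F k)) * F k x)) :=
      qseries_summable q hq _ 4 (fun k => hb1 ν k)
    have s3 : Summable (fun k : ℕ => (2 : ℝ)⁻¹ ^ (k + 1) * (q k)⁻¹ *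
        (2 * F k x * pairing μ (F k))) :=
      qseries_summable q hq _ 2 (fun k => hb2 μ k)
    have s4 : Summable (fun k : ℕ => (2 : ℝ)⁻¹ ^ (k + 1) * (q k)⁻¹ *
        (2 * F k x * pairing ν (F k))) :=
      qseries_summable q hq _ 2 (fun k => hb2 ν k)
    rw [intervalIntegral.integral_const, show ((1:ℝ) - 0) = 1 by norm_num, one_smul,
      hswμ, hswν, ← Summable.tsum_sub s3 s4, ← Summable.tsum_sub s1 s2]
    exact tsum_congr fun k => by ring
  · -- bound for first derivative
    intro μ x hx
    refine qseries_abs_le q hq _ 4 (fun k => ?_)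
    have h1 := hPd μ μ₀ k; have h2 := hbd k x hx
    rw [abs_mul, abs_mul, abs_two]
    nlinarith [abs_nonneg (pairing μ (F k) - pairing μ₀ (F k)), abs_nonneg (F k x)]
  · -- bound for second derivative
    intro x hx y hy
    refine qseries_abs_le q hq _ 2 (fun k => ?_)
    have h1 := hbd k x hx; have h2 := hbd k y hy
    rw [abs_mul, abs_mul, abs_two]
    nlinarith [abs_nonneg (F k x), abs_nonneg (F k y)]
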